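/- Let X and Y be nonempty subsets of a metric space Z whose closures in Z coincide. Then the ultrametric pseudodiameters of X and of Y (computed in the induced metrics) are equal: diam_u X = diam_u Y. -/

import Mathlib

open scoped ENNReal

noncomputable section

/-- Ultrametric pseudodistance: infimum over chains from `x` to `y` of the
maximal edge length of the chain. -/
noncomputable def ultraDist {X : Type*} [MetricSpace X] (x y : X) : ℝ≥0∞ :=
  ⨅ (n : ℕ) (f : Fin (n + 1) → X) (_ : f 0 = x) (_ : f (Fin.last n) = y),
    ⨆ i : Fin n, edist (f i.castSucc) (f i.succ)

/-- Ultrametric pseudodiameter. -/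
noncomputable def ultraDiam (X : Type*) [MetricSpace X] : ℝ≥0∞ :=
  ⨆ (x : X) (y : X), ultraDist x y

/-- A correspondence between `X` and `Y`: a relation whose projections are surjective. -/
def IsCorrespondence {X Y : Type*} (R : Set (X × Y)) : Prop :=
  (∀ x : X, ∃ y : Y, (x, y) ∈ R) ∧ (∀ y : Y, ∃ x : X, (x, y) ∈ R)

/-- Distortion of a relation. -/
noncomputable def distortion {X Y : Type*} [MetricSpace X] [MetricSpace Y]
    (R : Set (X × Y)) : ℝ≥0∞ :=
  ⨆ (p ∈ R) (q ∈ R), ENNReal.ofReal |dist p.1 q.1 - dist p.2 q.2|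

/-- Gromov–Hausdorff distance: half the infimal distortion of correspondences. -/
noncomputable def ghDist (X Y : Type*) [MetricSpace X] [MetricSpace Y] : ℝ≥0∞ :=
  (⨅ (R : Set (X × Y)) (_ : IsCorrespondence R), distortion R) / 2


private lemma ultraDiam_le_aux {Z : Type*} [MetricSpace Z] (X Y : Set Z)
    (hXY : X ⊆ closure Y) (hYX : Y ⊆ closure X) : ultraDiam X ≤ ultraDiam Y := by
  refine iSup₂_le fun x y => ?_
  by_cases hfin : ultraDiam Y = ∞
  · simp [hfin]
  refine ENNReal.le_of_forall_pos_le_add fun ε hε _ => ?_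
  set δ : ℝ≥0∞ := (ε : ℝ≥0∞) / 3 with hδdef
  have hδpos : 0 < δ := by
    apply ENNReal.div_pos (by exact_mod_cast hε.ne') (by norm_num)
  have hδ3 : δ + δ + δ ≤ (ε : ℝ≥0∞) := by
    have : δ + δ + δ = (ε : ℝ≥0∞) / 3 * 3 := by rw [hδdef]; ring
    rw [this, ENNReal.div_mul_cancel (by norm_num) (by norm_num)]
  -- approximate x and y by points of Y
  obtain ⟨x', hx'Y, hx'⟩ := EMetric.mem_closure_iff.mp (hXY x.2) δ hδpos
  obtain ⟨y', hy'Y, hy'⟩ := EMetric.mem_closure_iff.mp (hXY y.2) δ hδpos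
  -- a good chain in Y
  have hlt : ultraDist (⟨x', hx'Y⟩ : Y) ⟨y', hy'Y⟩ < ultraDiam Y + δ := by
    refine lt_of_le_of_lt ?_ (ENNReal.lt_add_right hfin hδpos.ne')
    exact le_iSup₂ (f := fun a b : Y => ultraDist a b) _ _
  rw [ultraDist] at hlt
  simp only [iInf_lt_iff] at hlt
  obtain ⟨n, f, hf0, hfl, hS⟩ := hlt
  -- approximate each chain point by a point of X
  have hp : ∀ i : Fin (n + 1), ∃ p : X, edist ((f i : Z)) (p : Z) < δ := by
    intro i
    obtain ⟨p, hpX, hpd⟩ := EMetric.mem_closure_iff.mp (hYX (f i).2) δ hδpos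
    exact ⟨⟨p, hpX⟩, hpd⟩
  choose p hpd using hp
  -- the new chain in X
  set g : Fin (n + 2 + 1) → X := Fin.cons x (Fin.snoc p y) with hg
  have hg0 : g 0 = x := by simp [hg]
  have hgl : g (Fin.last (n + 2)) = y := by
    have h' : Fin.last (n + 2) = (Fin.last (n + 1)).succ := rfl
    rw [hg, h', Fin.cons_succ, Fin.snoc_last]
  have hedge : ∀ i : Fin (n + 2), edist (g i.castSucc) (g i.succ) ≤
      (⨆ i : Fin n, edist (f i.castSucc) (f i.succ)) + (δ + δ) := by
    intro i
    induction i using Fin.cases with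
    | zero =>
      have h1 : g (Fin.castSucc 0) = x := by simp [hg]
      have h2 : g (Fin.succ 0) = p 0 := by
        have : (Fin.succ 0 : Fin (n + 2 + 1)) = (Fin.castSucc (0 : Fin (n + 1))).succ := rfl
        rw [this, hg, Fin.cons_succ]
        rw [Fin.snoc_castSucc]
      rw [h1, h2]
      calc edist (x : X) (p 0) = edist (x : Z) (p 0 : Z) := by rw [Subtype.edist_eq]
        _ ≤ edist (x : Z) x' + edist x' (p 0 : Z) := edist_triangle _ _ _
        _ ≤ δ + δ := by
            refine add_le_add hx'.le ?_
            have := hpd 0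
            rw [hf0] at this
            exact this.le
        _ ≤ _ := le_add_self
    | succ j =>
      have h1 : g (Fin.castSucc j.succ) = p j := by
        have : Fin.castSucc j.succ = (Fin.castSucc j).succ := by
          rw [Fin.succ_castSucc]
        rw [this]
        simp [hg]
      rw [h1]
      induction j using Fin.lastCases with
      | last =>
        have h2 : g (Fin.last n).succ.succ = y := by
          have h' : (Fin.last n).succ.succ = (Fin.last (n + 1)).succ := rfl
          rw [hg, h', Fin.cons_succ, Fin.snoc_last]
        rw [h2]
        calc edist (p (Fin.last n)) (y : X) = edist (p (Fin.last n) : Z) (y : Z) := by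
              rw [Subtype.edist_eq]
          _ ≤ edist (p (Fin.last n) : Z) y' + edist y' (y : Z) := edist_triangle _ _ _
          _ ≤ δ + δ := by
              refine add_le_add ?_ (by rw [edist_comm] at hy'; exact hy'.le)
              have := hpd (Fin.last n)
              rw [hfl] at this
              rw [edist_comm]
              exact this.le
          _ ≤ _ := le_add_self
      | cast k =>
        have h2 : g (Fin.castSucc k).succ.succ = p k.succ := by
          have : (Fin.castSucc k).succ.succ = (Fin.castSucc (k.succ)).succ := by
            rw [Fin.succ_castSucc]
          rw [this]
          simp [hg]
          rw [Fin.succ_castSucc, Fin.snoc_castSucc]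
        rw [h2]
        calc edist (p (Fin.castSucc k)) (p k.succ)
            = edist (p (Fin.castSucc k) : Z) (p k.succ : Z) := by rw [Subtype.edist_eq]
          _ ≤ edist (p (Fin.castSucc k) : Z) (f (Fin.castSucc k) : Z)
              + edist ((f (Fin.castSucc k) : Z)) (f k.succ : Z)
              + edist ((f k.succ : Z)) (p k.succ : Z) := edist_triangle4 _ _ _ _
          _ ≤ δ + (⨆ i : Fin n, edist (f i.castSucc) (f i.succ)) + δ := by
              refine add_le_add (add_le_add ?_ ?_) ?_
              · rw [edist_comm]; exact (hpd _).le
              · rw [← Subtype.edist_eq]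
                exact le_iSup (fun i : Fin n => edist (f i.castSucc) (f i.succ)) k
              · exact (hpd _).le
          _ = _ := by ring
  calc ultraDist x y ≤ ⨆ i : Fin (n + 2), edist (g i.castSucc) (g i.succ) := by
        refine iInf_le_of_le (n + 2) (iInf_le_of_le g (iInf_le_of_le hg0 (iInf_le _ hgl)))
    _ ≤ (⨆ i : Fin n, edist (f i.castSucc) (f i.succ)) + (δ + δ) := iSup_le hedge
    _ ≤ (ultraDiam Y + δ) + (δ + δ) := add_le_add hS.le le_rfl
    _ = ultraDiam Y + (δ + δ + δ) := by ring
    _ ≤ ultraDiam Y + ε := add_le_add le_rfl hδ3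

/-- nonempty subsets of a metric space with the same closure have
equal ultrametric pseudodiameters (in the induced metrics). -/
theorem ultraDiam_eq_of_closure_eq {Z : Type*} [MetricSpace Z] (X Y : Set Z)
    (hX : X.Nonempty) (hY : Y.Nonempty) (h : closure X = closure Y) :
    ultraDiam X = ultraDiam Y := by
  refine le_antisymm ?_ ?_
  · exact ultraDiam_le_aux X Y (h ▸ subset_closure) (h ▸ subset_closure)
  · exact ultraDiam_le_aux Y X (h ▸ subset_closure) (h ▸ subset_closure)

end
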